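/- Let l₁, l₂ > 0. Then the number of pairs of nonnegative integers (m, n) with m²π²/l₁² + n²π²/l₂² ≤ λ, divided by λ, tends to l₁l₂/(4π) as λ → ∞. (This is Weyl's law for the Neumann eigenvalues of a rectangle with side lengths l₁ and l₂.) -/

import Mathlib

open Real Filter MeasureTheory intervalIntegral Finset

noncomputable def wg (l₁ l₂ Λ x : ℝ) : ℝ :=
  Real.sqrt (max (Λ - x ^ 2 * Real.pi ^ 2 / l₁ ^ 2) 0) * (l₂ / Real.pi)

lemma waux (x c L : ℝ) (hx : 0 ≤ x) (hc : 0 < c) (hL : 0 ≤ L) :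
    x ^ 2 * Real.pi ^ 2 / c ^ 2 ≤ L ↔ x ≤ Real.sqrt L * (c / Real.pi) := by
  have hπ := Real.pi_pos
  rw [show x ^ 2 * Real.pi ^ 2 / c ^ 2 = (x * (Real.pi / c)) ^ 2 by field_simp]
  rw [← Real.le_sqrt (by positivity) hL]
  rw [show Real.sqrt L * (c / Real.pi) = Real.sqrt L / (Real.pi / c) by field_simp]
  rw [le_div_iff₀ (by positivity), mul_comm]

lemma wint01 : ∫ x in (0:ℝ)..1, Real.sqrt (1 - x ^ 2) = Real.pi / 4 := by
  have hcont : Continuous fun x : ℝ => Real.sqrt (1 - x ^ 2) := by fun_prop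
  have heven : (∫ x in (-1:ℝ)..0, Real.sqrt (1 - x ^ 2)) =
      ∫ x in (0:ℝ)..1, Real.sqrt (1 - x ^ 2) := by
    have := intervalIntegral.integral_comp_neg (a := (0:ℝ)) (b := 1)
      (fun x => Real.sqrt (1 - x ^ 2))
    simp only [neg_zero, neg_neg] at this
    rw [← this]
    congr 1
    ext x
    rw [neg_pow, show ((-1:ℝ))^2 = 1 by norm_num, one_mul]
  have hsplit : (∫ x in (-1:ℝ)..0, Real.sqrt (1 - x ^ 2)) +
      (∫ x in (0:ℝ)..1, Real.sqrt (1 - x ^ 2)) = ∫ x in (-1:ℝ)..1, Real.sqrt (1 - x ^ 2) :=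
    intervalIntegral.integral_add_adjacent_intervals
      (hcont.intervalIntegrable _ _) (hcont.intervalIntegrable _ _)
  have h := integral_sqrt_one_sub_sq
  rw [heven] at hsplit
  linarith [hsplit, h]

lemma wcont (l₁ l₂ Λ : ℝ) : Continuous (wg l₁ l₂ Λ) := by
  unfold wg; fun_prop

lemma wnonneg (l₁ l₂ Λ : ℝ) (h₂ : 0 < l₂) (x : ℝ) : 0 ≤ wg l₁ l₂ Λ x := by
  unfold wg
  have := Real.pi_pos
  positivity

lemma wanti (l₁ l₂ Λ : ℝ) (h₁ : 0 < l₁) (h₂ : 0 < l₂) (T : ℝ) :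
    AntitoneOn (wg l₁ l₂ Λ) (Set.Icc 0 T) := by
  intro x hx y hy hxy
  unfold wg
  have hπ := Real.pi_pos
  apply mul_le_mul_of_nonneg_right _ (by positivity)
  apply Real.sqrt_le_sqrt
  apply max_le_max_right
  have hx2 : x ^ 2 ≤ y ^ 2 := by nlinarith [hx.1]
  gcongr

lemma wintegral (l₁ l₂ : ℝ) (h₁ : 0 < l₁) (h₂ : 0 < l₂) (Λ : ℝ) (hΛ : 0 < Λ)
    (T : ℝ) (hT : Real.sqrt Λ * (l₁ / Real.pi) ≤ T) :
    ∫ x in (0:ℝ)..T, wg l₁ l₂ Λ x = Λ * (l₁ * l₂ / (4 * Real.pi)) := by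
  have hπ := Real.pi_pos
  set R : ℝ := Real.sqrt Λ * (l₁ / Real.pi) with hR
  have hRpos : 0 < R := by
    have : 0 < Real.sqrt Λ := Real.sqrt_pos.mpr hΛ
    positivity
  have hsq : Real.sqrt Λ * Real.sqrt Λ = Λ := Real.mul_self_sqrt hΛ.le
  have hR2 : R ^ 2 = Λ * l₁ ^ 2 / Real.pi ^ 2 := by
    rw [hR, mul_pow, div_pow, sq, hsq]; ring
  -- split the integral
  have hsplit : (∫ x in (0:ℝ)..R, wg l₁ l₂ Λ x) + (∫ x in R..T, wg l₁ l₂ Λ x)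
      = ∫ x in (0:ℝ)..T, wg l₁ l₂ Λ x :=
    intervalIntegral.integral_add_adjacent_intervals
      ((wcont l₁ l₂ Λ).intervalIntegrable _ _) ((wcont l₁ l₂ Λ).intervalIntegrable _ _)
  have hzero : (∫ x in R..T, wg l₁ l₂ Λ x) = 0 := by
    rw [show (0:ℝ) = ∫ x in R..T, (0:ℝ) by simp]
    apply intervalIntegral.integral_congr
    intro x hx
    rw [Set.uIcc_of_le hT] at hx
    have hxR : R ≤ x := hx.1
    have hkey : Λ - x ^ 2 * Real.pi ^ 2 / l₁ ^ 2 ≤ 0 := by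
      have hx2 : Λ * l₁ ^ 2 / Real.pi ^ 2 ≤ x ^ 2 := by rw [← hR2]; nlinarith [hRpos.le]
      rw [div_le_iff₀ (by positivity)] at hx2
      rw [sub_nonpos, le_div_iff₀ (by positivity)]
      linarith
    unfold wg
    rw [max_eq_right hkey, Real.sqrt_zero, zero_mul]
  -- the main piece
  have hcongr : (∫ x in (0:ℝ)..R, wg l₁ l₂ Λ x)
      = ∫ x in (0:ℝ)..R, (fun u => Real.sqrt Λ * (l₂ / Real.pi) * Real.sqrt (1 - u ^ 2)) (x / R) := by
    apply intervalIntegral.integral_congr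
    intro x hx
    rw [Set.uIcc_of_le hRpos.le] at hx
    have hx0 : 0 ≤ x := hx.1
    have hxR : x ≤ R := hx.2
    have hdiv : x / R ∈ Set.Icc (0:ℝ) 1 := ⟨by positivity, (div_le_one hRpos).mpr hxR⟩
    have hone : 0 ≤ 1 - (x / R) ^ 2 := by nlinarith [hdiv.1, hdiv.2]
    have hkey : Λ - x ^ 2 * Real.pi ^ 2 / l₁ ^ 2 = Λ * (1 - (x / R) ^ 2) := by
      rw [div_pow, hR2]
      field_simp
    unfold wg
    simp only
    rw [hkey, max_eq_left (by positivity), Real.sqrt_mul hΛ.le]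
    ring
  have hcomp := intervalIntegral.integral_comp_div (a := (0:ℝ)) (b := R)
    (fun u => Real.sqrt Λ * (l₂ / Real.pi) * Real.sqrt (1 - u ^ 2)) hRpos.ne'
  rw [← hsplit, hzero, add_zero, hcongr, hcomp,
    zero_div, div_self hRpos.ne', intervalIntegral.integral_const_mul, wint01,
    smul_eq_mul, hR]
  field_simp
  linear_combination hsq

lemma wcard (l₁ l₂ : ℝ) (h₁ : 0 < l₁) (h₂ : 0 < l₂) (Λ : ℝ) (hΛ : 0 ≤ Λ) :
    Nat.card {p : ℕ × ℕ //
      (p.1 : ℝ) ^ 2 * Real.pi ^ 2 / l₁ ^ 2 + (p.2 : ℝ) ^ 2 * Real.pi ^ 2 / l₂ ^ 2 ≤ Λ}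
    = ∑ m ∈ Finset.range (⌊Real.sqrt Λ * (l₁ / Real.pi)⌋₊ + 1),
        (⌊wg l₁ l₂ Λ m⌋₊ + 1) := by
  classical
  have hπ := Real.pi_pos
  set R : ℝ := Real.sqrt Λ * (l₁ / Real.pi) with hRdef
  have hR0 : 0 ≤ R := by positivity
  set M : ℕ := ⌊R⌋₊ with hM
  set K : ℕ → ℕ := fun m => ⌊wg l₁ l₂ Λ (m : ℝ)⌋₊ with hK
  -- the key pointwise iff
  have hiff : ∀ m n : ℕ,
      ((m : ℝ) ^ 2 * Real.pi ^ 2 / l₁ ^ 2 + (n : ℝ) ^ 2 * Real.pi ^ 2 / l₂ ^ 2 ≤ Λ)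
      ↔ (m ≤ M ∧ n ≤ K m) := by
    intro m n
    constructor
    · intro h
      have hm2 : (m : ℝ) ^ 2 * Real.pi ^ 2 / l₁ ^ 2 ≤ Λ :=
        le_trans (le_add_of_nonneg_right (by positivity)) h
      have hmR : (m : ℝ) ≤ R := (waux m l₁ Λ (by positivity) h₁ hΛ).mp hm2
      have hc : 0 ≤ Λ - (m : ℝ) ^ 2 * Real.pi ^ 2 / l₁ ^ 2 := by linarith
      have hn2 : (n : ℝ) ^ 2 * Real.pi ^ 2 / l₂ ^ 2 ≤ Λ - (m : ℝ) ^ 2 * Real.pi ^ 2 / l₁ ^ 2 := by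
        linarith
      have hng : (n : ℝ) ≤ wg l₁ l₂ Λ m := by
        have := (waux n l₂ _ (by positivity) h₂ hc).mp hn2
        unfold wg
        rwa [max_eq_left hc]
      exact ⟨Nat.le_floor hmR, Nat.le_floor hng⟩
    · rintro ⟨hm, hn⟩
      have hmR : (m : ℝ) ≤ R :=
        le_trans (by exact_mod_cast Nat.cast_le.mpr hm) (Nat.floor_le hR0)
      have hm2 : (m : ℝ) ^ 2 * Real.pi ^ 2 / l₁ ^ 2 ≤ Λ :=
        (waux m l₁ Λ (by positivity) h₁ hΛ).mpr hmR
      have hc : 0 ≤ Λ - (m : ℝ) ^ 2 * Real.pi ^ 2 / l₁ ^ 2 := by linarith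
      have hng : (n : ℝ) ≤ wg l₁ l₂ Λ m :=
        le_trans (by exact_mod_cast Nat.cast_le.mpr hn) (Nat.floor_le (wnonneg l₁ l₂ Λ h₂ _))
      have hn2 : (n : ℝ) ^ 2 * Real.pi ^ 2 / l₂ ^ 2 ≤ Λ - (m : ℝ) ^ 2 * Real.pi ^ 2 / l₁ ^ 2 := by
        apply (waux n l₂ _ (by positivity) h₂ hc).mpr
        unfold wg at hng
        rwa [max_eq_left hc] at hng
      linarith
  -- the finset
  set S : Finset (ℕ × ℕ) := (Finset.range (M + 1)).biUnion
    (fun m => (Finset.range (K m + 1)).image (fun n => (m, n))) with hS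
  have hmemS : ∀ p : ℕ × ℕ, p ∈ S ↔ (p.1 ≤ M ∧ p.2 ≤ K p.1) := by
    rintro ⟨m, n⟩
    simp only [hS, Finset.mem_biUnion, Finset.mem_image, Finset.mem_range, Nat.lt_succ_iff]
    constructor
    · rintro ⟨a, ha, b, hb, h⟩
      obtain ⟨rfl, rfl⟩ := Prod.mk.inj h
      exact ⟨ha, hb⟩
    · rintro ⟨hm, hn⟩
      exact ⟨m, hm, n, hn, rfl⟩
  have hcard1 : Nat.card {p : ℕ × ℕ //
      (p.1 : ℝ) ^ 2 * Real.pi ^ 2 / l₁ ^ 2 + (p.2 : ℝ) ^ 2 * Real.pi ^ 2 / l₂ ^ 2 ≤ Λ}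
      = S.card := by
    have e : {p : ℕ × ℕ //
        (p.1 : ℝ) ^ 2 * Real.pi ^ 2 / l₁ ^ 2 + (p.2 : ℝ) ^ 2 * Real.pi ^ 2 / l₂ ^ 2 ≤ Λ}
        ≃ {p : ℕ × ℕ // p ∈ S} :=
      Equiv.subtypeEquivRight (fun p => (hiff p.1 p.2).trans (hmemS p).symm)
    rw [Nat.card_congr e, Nat.card_eq_finsetCard]
  rw [hcard1, hS]
  rw [Finset.card_biUnion]
  · apply Finset.sum_congr rfl
    intro m _
    rw [Finset.card_image_of_injective _ (fun a b h => (Prod.mk.inj h).2), Finset.card_range]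
  · intro x _ y _ hxy
    simp only [Finset.disjoint_left, Finset.mem_image, Finset.mem_range]
    rintro p ⟨a, ha, rfl⟩ ⟨b, hb, h⟩
    exact hxy (Prod.mk.inj h).1.symm

lemma wbounds (l₁ l₂ : ℝ) (h₁ : 0 < l₁) (h₂ : 0 < l₂) (Λ : ℝ) (hΛ : 1 ≤ Λ) :
    Λ * (l₁ * l₂ / (4 * Real.pi)) ≤
      (Nat.card {p : ℕ × ℕ //
        (p.1 : ℝ) ^ 2 * Real.pi ^ 2 / l₁ ^ 2 + (p.2 : ℝ) ^ 2 * Real.pi ^ 2 / l₂ ^ 2 ≤ Λ} : ℝ) ∧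
    (Nat.card {p : ℕ × ℕ //
        (p.1 : ℝ) ^ 2 * Real.pi ^ 2 / l₁ ^ 2 + (p.2 : ℝ) ^ 2 * Real.pi ^ 2 / l₂ ^ 2 ≤ Λ} : ℝ)
      ≤ Λ * (l₁ * l₂ / (4 * Real.pi))
        + Real.sqrt Λ * (l₁ / Real.pi + l₂ / Real.pi + 1) := by
  have hπ := Real.pi_pos
  have hΛ0 : (0:ℝ) < Λ := lt_of_lt_of_le one_pos hΛ
  have hsqrt1 : (1:ℝ) ≤ Real.sqrt Λ := by
    rw [show (1:ℝ) = Real.sqrt 1 by simp]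
    exact Real.sqrt_le_sqrt hΛ
  rw [wcard l₁ l₂ h₁ h₂ Λ hΛ0.le]
  set R : ℝ := Real.sqrt Λ * (l₁ / Real.pi) with hRdef
  have hR0 : 0 ≤ R := by positivity
  set M : ℕ := ⌊R⌋₊ with hM
  have hRM : R ≤ ((M + 1 : ℕ) : ℝ) := by
    have := Nat.lt_floor_add_one R
    push_cast
    push_cast at this
    linarith
  have hMR : ((M : ℕ) : ℝ) ≤ R := Nat.floor_le hR0
  push_cast
  -- lower bound
  have hlow := AntitoneOn.integral_le_sum (f := wg l₁ l₂ Λ) (x₀ := 0) (a := M + 1)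
    (wanti l₁ l₂ Λ h₁ h₂ _)
  simp only [zero_add] at hlow
  have hIeq := wintegral l₁ l₂ h₁ h₂ Λ hΛ0 (((M + 1 : ℕ)) : ℝ) hRM
  have hterm : ∀ m ∈ Finset.range (M + 1), wg l₁ l₂ Λ (m : ℝ) ≤ (⌊wg l₁ l₂ Λ (m : ℝ)⌋₊ : ℝ) + 1 :=
    fun m _ => (Nat.lt_floor_add_one _).le
  have hlower : Λ * (l₁ * l₂ / (4 * Real.pi)) ≤
      ∑ m ∈ Finset.range (M + 1), ((⌊wg l₁ l₂ Λ (m : ℝ)⌋₊ : ℝ) + 1) := by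
    calc Λ * (l₁ * l₂ / (4 * Real.pi)) = ∫ x in (0:ℝ)..(((M + 1 : ℕ)) : ℝ), wg l₁ l₂ Λ x :=
          hIeq.symm
      _ ≤ ∑ m ∈ Finset.range (M + 1), wg l₁ l₂ Λ (m : ℝ) := by
          convert hlow using 2 <;> push_cast <;> ring
      _ ≤ _ := Finset.sum_le_sum hterm
  refine ⟨hlower, ?_⟩
  -- upper bound
  have hup1 : ∑ m ∈ Finset.range (M + 1), ((⌊wg l₁ l₂ Λ (m : ℝ)⌋₊ : ℝ) + 1)
      ≤ (∑ m ∈ Finset.range (M + 1), wg l₁ l₂ Λ (m : ℝ)) + ((M : ℝ) + 1) := by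
    have : ∀ m ∈ Finset.range (M + 1),
        ((⌊wg l₁ l₂ Λ (m : ℝ)⌋₊ : ℝ) + 1) ≤ wg l₁ l₂ Λ (m : ℝ) + 1 := by
      intro m _
      have := Nat.floor_le (wnonneg l₁ l₂ Λ h₂ (m : ℝ))
      linarith
    calc ∑ m ∈ Finset.range (M + 1), ((⌊wg l₁ l₂ Λ (m : ℝ)⌋₊ : ℝ) + 1)
        ≤ ∑ m ∈ Finset.range (M + 1), (wg l₁ l₂ Λ (m : ℝ) + 1) := Finset.sum_le_sum this
      _ = (∑ m ∈ Finset.range (M + 1), wg l₁ l₂ Λ (m : ℝ)) + ((M : ℝ) + 1) := by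
          rw [Finset.sum_add_distrib, Finset.sum_const, Finset.card_range]
          push_cast
          ring
  have hsplit : ∑ m ∈ Finset.range (M + 1), wg l₁ l₂ Λ (m : ℝ)
      = (∑ i ∈ Finset.range M, wg l₁ l₂ Λ ((i : ℝ) + 1)) + wg l₁ l₂ Λ 0 := by
    rw [Finset.sum_range_succ' (fun i => wg l₁ l₂ Λ (i : ℝ)) M]
    push_cast
    simp [add_comm]
  have hup2 := AntitoneOn.sum_le_integral (f := wg l₁ l₂ Λ) (x₀ := 0) (a := M)
    (wanti l₁ l₂ Λ h₁ h₂ _)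
  simp only [zero_add] at hup2
  have hup3 : (∫ x in (0:ℝ)..((M : ℕ) : ℝ), wg l₁ l₂ Λ x)
      ≤ ∫ x in (0:ℝ)..(((M + 1 : ℕ)) : ℝ), wg l₁ l₂ Λ x := by
    apply intervalIntegral.integral_mono_interval (le_refl (0:ℝ))
      (by positivity) (by push_cast; linarith)
    · filter_upwards with x using wnonneg l₁ l₂ Λ h₂ x
    · exact (wcont l₁ l₂ Λ).intervalIntegrable _ _
  have hup2' : (∑ i ∈ Finset.range M, wg l₁ l₂ Λ ((i : ℝ) + 1))
      ≤ ∫ x in (0:ℝ)..((M : ℕ) : ℝ), wg l₁ l₂ Λ x := by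
    convert hup2 using 2 <;> push_cast <;> ring
  have hg0 : wg l₁ l₂ Λ 0 = Real.sqrt Λ * (l₂ / Real.pi) := by
    unfold wg
    norm_num [max_eq_left hΛ0.le]
  calc ∑ m ∈ Finset.range (M + 1), ((⌊wg l₁ l₂ Λ (m : ℝ)⌋₊ : ℝ) + 1)
      ≤ (∑ m ∈ Finset.range (M + 1), wg l₁ l₂ Λ (m : ℝ)) + ((M : ℝ) + 1) := hup1
    _ ≤ (Λ * (l₁ * l₂ / (4 * Real.pi)) + Real.sqrt Λ * (l₂ / Real.pi)) + ((M : ℝ) + 1) := by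
        rw [hsplit, hg0]
        have := le_trans hup2' (le_of_le_of_eq hup3 hIeq)
        linarith
    _ ≤ Λ * (l₁ * l₂ / (4 * Real.pi)) + Real.sqrt Λ * (l₁ / Real.pi + l₂ / Real.pi + 1) := by
        have hM1 : (M : ℝ) + 1 ≤ Real.sqrt Λ * (l₁ / Real.pi) + Real.sqrt Λ := by
          have : (M : ℝ) ≤ R := hMR
          rw [hRdef] at this
          linarith
        nlinarith [Real.sqrt_nonneg Λ]

lemma wsqrt_atTop : Filter.Tendsto Real.sqrt Filter.atTop Filter.atTop := by
  rw [Filter.tendsto_atTop_atTop]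
  intro b
  refine ⟨max b 0 ^ 2, fun a ha => le_trans (le_max_left b 0) ?_⟩
  rw [← Real.sqrt_sq (le_max_right b 0)]
  exact Real.sqrt_le_sqrt ha

/-- Weyl's law for the Neumann eigenvalues of a rectangle with side lengths `l₁`, `l₂`:
the number of pairs of nonnegative integers `(m, n)` with
`m²π²/l₁² + n²π²/l₂² ≤ Λ`, divided by `Λ`, tends to `l₁l₂/(4π)` as `Λ → ∞`. -/
theorem weyl_law_rectangle_neumann (l₁ l₂ : ℝ) (h₁ : 0 < l₁) (h₂ : 0 < l₂) :
    Filter.Tendsto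
      (fun Λ : ℝ =>
        (Nat.card {p : ℕ × ℕ //
          (p.1 : ℝ) ^ 2 * Real.pi ^ 2 / l₁ ^ 2 + (p.2 : ℝ) ^ 2 * Real.pi ^ 2 / l₂ ^ 2 ≤ Λ} : ℝ)
          / Λ)
      Filter.atTop (nhds (l₁ * l₂ / (4 * Real.pi))) := by
  have hπ := Real.pi_pos
  set L : ℝ := l₁ * l₂ / (4 * Real.pi) with hL
  set C : ℝ := l₁ / Real.pi + l₂ / Real.pi + 1 with hC
  have htends : Filter.Tendsto (fun Λ : ℝ => L + C / Real.sqrt Λ) Filter.atTop (nhds L) := by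
    have h0 : Filter.Tendsto (fun Λ : ℝ => C / Real.sqrt Λ) Filter.atTop (nhds 0) :=
      Filter.Tendsto.div_atTop tendsto_const_nhds wsqrt_atTop
    simpa using tendsto_const_nhds.add h0
  apply tendsto_of_tendsto_of_tendsto_of_le_of_le' (tendsto_const_nhds) htends
  · filter_upwards [Filter.eventually_ge_atTop (1:ℝ)] with Λ hΛ
    have hΛ0 : (0:ℝ) < Λ := lt_of_lt_of_le one_pos hΛ
    have := (wbounds l₁ l₂ h₁ h₂ Λ hΛ).1
    rw [le_div_iff₀ hΛ0]
    linarith [this]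
  · filter_upwards [Filter.eventually_ge_atTop (1:ℝ)] with Λ hΛ
    have hΛ0 : (0:ℝ) < Λ := lt_of_lt_of_le one_pos hΛ
    have hs0 : (0:ℝ) < Real.sqrt Λ := Real.sqrt_pos.mpr hΛ0
    have hub := (wbounds l₁ l₂ h₁ h₂ Λ hΛ).2
    rw [div_le_iff₀ hΛ0]
    have hkey : Real.sqrt Λ * C = (C / Real.sqrt Λ) * Λ := by
      have hs : Real.sqrt Λ * Real.sqrt Λ = Λ := Real.mul_self_sqrt hΛ0.le
      field_simp
      linear_combination C * hs
    calc (Nat.card _ : ℝ) ≤ Λ * L + Real.sqrt Λ * C := hub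
      _ = Λ * L + (C / Real.sqrt Λ) * Λ := by rw [hkey]
      _ = (L + C / Real.sqrt Λ) * Λ := by ring
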